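/- Let S ⊆ ℕ be a subset of density 1. Then the functions S → ℂ given by n ↦ λ^n, for λ ranging over ℂ \ {0}, are linearly independent over ℂ: for every finite nonempty set Λ ⊆ ℂ \ {0} and every function c : Λ → ℂ, if Σ_{λ ∈ Λ} c(λ)·λ^n = 0 for all n ∈ S, then c(λ) = 0 for all λ ∈ Λ. -/

import Mathlib

open Filter Polynomial

theorem linearIndependent_characters_on_density_one_set
    (S : Set ℕ)
    (hS : Tendsto (fun N : ℕ => ((S ∩ Set.Icc 1 N).ncard : ℝ) / (N : ℝ))
      atTop (nhds 1))
    (Λ : Finset ℂ) (hne : Λ.Nonempty) (h0 : (0 : ℂ) ∉ Λ)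
    (c : ℂ → ℂ)
    (hvanish : ∀ n ∈ S, ∑ l ∈ Λ, c l * l ^ n = 0) :
    ∀ l ∈ Λ, c l = 0 := by
  classical
  set k := Λ.card with hk
  have hk1 : 1 ≤ k := hne.card_pos
  -- Step 1: S contains k consecutive integers
  have hblock : ∃ n : ℕ, ∀ j < k, n + j ∈ S := by
    by_contra H
    push_neg at H
    choose f hf hfS using H
    set g : ℕ → ℕ := fun i => (1 + i * k) + f (1 + i * k) with hg
    have hgS : ∀ i, g i ∉ S := fun i => hfS _
    have hgmono : StrictMono g := by
      intro i j hij
      have h1 : g i < (i + 1) * k + 1 := by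
        have := hf (1 + i * k)
        simp only [hg]
        nlinarith
      have h2 : (i + 1) * k + 1 ≤ g j := by
        have : (i + 1) * k ≤ j * k := Nat.mul_le_mul_right k hij
        simp only [hg]
        omega
      omega
    -- count
    have hcount : ∀ M : ℕ, ((S ∩ Set.Icc 1 (M * k)).ncard : ℝ) ≤ (M * k : ℝ) - M := by
      intro M
      have himg : g '' Set.Iio M ⊆ Set.Icc 1 (M * k) := by
        rintro _ ⟨i, hi, rfl⟩
        simp only [Set.mem_Iio] at hi
        constructor
        · simp only [hg]; omega
        · have h1 : f (1 + i * k) < k := hf _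
          have h2 : (i + 1) * k ≤ M * k := Nat.mul_le_mul_right k hi
          simp only [hg]; nlinarith
      have hfinIcc : (Set.Icc 1 (M * k)).Finite := Set.finite_Icc _ _
      have hIccCard : (Set.Icc 1 (M * k)).ncard = M * k := by
        rw [← Finset.coe_Icc, Set.ncard_coe_finset, Nat.card_Icc]
        omega
      have himgcard : (g '' Set.Iio M).ncard = M := by
        rw [Set.ncard_image_of_injOn (hgmono.injective.injOn)]
        rw [← Finset.coe_Iio, Set.ncard_coe_finset, Nat.card_Iio]
      have hsub : S ∩ Set.Icc 1 (M * k) ⊆ Set.Icc 1 (M * k) \ g '' Set.Iio M := by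
        rintro x ⟨hxS, hxI⟩
        refine ⟨hxI, ?_⟩
        rintro ⟨i, _, rfl⟩
        exact hgS i hxS
      have hle : (S ∩ Set.Icc 1 (M * k)).ncard ≤ M * k - M := by
        calc (S ∩ Set.Icc 1 (M * k)).ncard
            ≤ (Set.Icc 1 (M * k) \ g '' Set.Iio M).ncard :=
              Set.ncard_le_ncard hsub hfinIcc.diff
          _ = M * k - M := by
              rw [Set.ncard_diff himg (Set.Finite.image _ (Set.finite_Iio _)), hIccCard, himgcard]
      have hMle : M ≤ M * k := Nat.le_mul_of_pos_right M hk1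
      calc ((S ∩ Set.Icc 1 (M * k)).ncard : ℝ) ≤ ((M * k - M : ℕ) : ℝ) := by
            exact_mod_cast hle
        _ = (M * k : ℝ) - M := by push_cast [hMle]; ring
    -- limit along M * k
    have hmul : Tendsto (fun M : ℕ => M * k) atTop atTop := by
      apply StrictMono.tendsto_atTop
      intro a b hab
      exact (Nat.mul_lt_mul_right hk1).mpr hab
    have hcomp : Tendsto (fun M : ℕ => ((S ∩ Set.Icc 1 (M * k)).ncard : ℝ) / ((M * k : ℕ) : ℝ))
        atTop (nhds 1) := hS.comp hmul
    have hbound : ∀ᶠ M : ℕ in atTop,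
        ((S ∩ Set.Icc 1 (M * k)).ncard : ℝ) / ((M * k : ℕ) : ℝ) ≤ 1 - 1 / k := by
      filter_upwards [eventually_ge_atTop 1] with M hM
      have hMk : (0 : ℝ) < (M * k : ℕ) := by
        have : 1 ≤ M * k := Nat.one_le_iff_ne_zero.2 (by positivity)
        exact_mod_cast this
      rw [div_le_iff₀ hMk]
      have := hcount M
      have hkR : (0 : ℝ) < k := by exact_mod_cast hk1
      have hMR : (1 : ℝ) ≤ M := by exact_mod_cast hM
      have hcast : ((M * k : ℕ) : ℝ) = (M : ℝ) * k := by push_cast; ring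
      rw [hcast]
      have : (1 - 1 / (k:ℝ)) * ((M:ℝ) * k) = (M:ℝ) * k - M := by
        field_simp
      rw [this]
      linarith [hcount M]
    have hle1 : (1 : ℝ) ≤ 1 - 1 / k := le_of_tendsto hcomp hbound
    have hkR : (0 : ℝ) < 1 / k := by positivity
    linarith
  obtain ⟨n, hn⟩ := hblock
  -- Step 2: Vandermonde via Lagrange polynomial
  have hsum : ∀ j < k, ∑ l ∈ Λ, (c l * l ^ n) * l ^ j = 0 := by
    intro j hj
    have := hvanish (n + j) (hn j hj)
    calc ∑ l ∈ Λ, (c l * l ^ n) * l ^ j = ∑ l ∈ Λ, c l * l ^ (n + j) := by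
          apply Finset.sum_congr rfl
          intro l _
          rw [pow_add]; ring
      _ = 0 := this
  intro l0 hl0
  set p : Polynomial ℂ := ∏ μ ∈ Λ.erase l0, (X - C μ) with hp
  have hdeglt : p.natDegree < k := by
    have : p.natDegree = ∑ μ ∈ Λ.erase l0, (X - C μ).natDegree :=
      natDegree_prod _ _ (fun μ _ => X_sub_C_ne_zero μ)
    simp only [natDegree_X_sub_C, Finset.sum_const, smul_eq_mul, mul_one] at this
    rw [this, Finset.card_erase_of_mem hl0]
    omega
  have key : ∑ l ∈ Λ, (c l * l ^ n) * p.eval l = 0 := by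
    have heval : ∀ l : ℂ, p.eval l = ∑ j ∈ Finset.range k, p.coeff j * l ^ j :=
      fun l => eval_eq_sum_range' hdeglt l
    calc ∑ l ∈ Λ, (c l * l ^ n) * p.eval l
        = ∑ j ∈ Finset.range k, p.coeff j * ∑ l ∈ Λ, (c l * l ^ n) * l ^ j := by
          simp_rw [heval, Finset.mul_sum]
          rw [Finset.sum_comm]
          apply Finset.sum_congr rfl
          intro j _
          apply Finset.sum_congr rfl
          intro l _
          ring
      _ = 0 := by
          apply Finset.sum_eq_zero
          intro j hj
          rw [hsum j (Finset.mem_range.mp hj), mul_zero]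
  have hsingle : (c l0 * l0 ^ n) * p.eval l0 = 0 := by
    rw [← key]
    symm
    apply Finset.sum_eq_single l0
    · intro l hl hlne
      have : p.eval l = 0 := by
        rw [hp, eval_prod]
        apply Finset.prod_eq_zero (Finset.mem_erase.mpr ⟨hlne, hl⟩)
        simp
      rw [this, mul_zero]
    · intro h; exact absurd hl0 h
  have hpne : p.eval l0 ≠ 0 := by
    rw [hp, eval_prod]
    apply Finset.prod_ne_zero_iff.mpr
    intro μ hμ
    have : μ ≠ l0 := (Finset.mem_erase.mp hμ).1
    simp only [eval_sub, eval_X, eval_C, sub_ne_zero]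
    exact this.symm
  have hl0ne : l0 ≠ 0 := fun h => h0 (h ▸ hl0)
  have : c l0 * l0 ^ n = 0 := by
    rcases mul_eq_zero.mp hsingle with h | h
    · exact h
    · exact absurd h hpne
  rcases mul_eq_zero.mp this with h | h
  · exact h
  · exact absurd h (pow_ne_zero n hl0ne)
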